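/- Let V be a type and K a family of finsets of V such that every s ∈ K has s.card ≤ 3 (a simplicial complex of dimension at most 2). Let f : V → (Fin m → ZMod 2) be a map such that for every s ∈ K the family (f v), v ∈ s, is linearly independent over ZMod 2. Let p be any prime and define f_p : V → (Fin m → ZMod p) by f_p v i = ((f v i).val : ZMod p) (reading the 0/1 coordinates of f v in ZMod p). Then for every s ∈ K the family (f_p v), v ∈ s, is linearly independent over ZMod p. (Consequently, s_2(K) ≤ s_p(K) for every prime p whenever dim K ≤ 2.) -/
import Mathlib

namespace Stmt19Aux

variable {m p : ℕ}

private lemma zmod2_cases' : ∀ x : ZMod 2, x = 0 ∨ x = 1 := by decide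

private lemma zmod2_cases (x : ZMod 2) : x = 0 ∨ x = 1 := zmod2_cases' x

private lemma add_self2' : ∀ x : ZMod 2, x + x = 0 := by decide

private lemma add_self2 (x : ZMod 2) : x + x = 0 := add_self2' x

private lemma cast_self' : ∀ x : ZMod 2, ((x.val : ℕ) : ZMod 2) = x := by decide

private lemma cast_self (x : ZMod 2) : ((x.val : ℕ) : ZMod 2) = x := cast_self' x

private lemma cast01 (hp : p.Prime) (x : ZMod 2) :
    (x = 0 ∧ ((x.val : ℕ) : ZMod p) = 0) ∨ (x = 1 ∧ ((x.val : ℕ) : ZMod p) = 1) := by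
  rcases zmod2_cases x with h | h
  · exact Or.inl ⟨h, by simp [h]⟩
  · exact Or.inr ⟨h, by norm_num [h, show (1:ZMod 2).val = 1 from rfl]⟩

private lemma cast_of_zero (hp : p.Prime) {x : ZMod 2} (h : x = 0) :
    ((x.val : ℕ) : ZMod p) = 0 := by simp [h]

private lemma cast_of_one (hp : p.Prime) {x : ZMod 2} (h : x = 1) :
    ((x.val : ℕ) : ZMod p) = 1 := by norm_num [h, show (1:ZMod 2).val = 1 from rfl]

private lemma two_ne_zero' (hp : p.Prime) (h2 : p ≠ 2) : (2 : ZMod p) ≠ 0 := by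
  intro h
  have hd : p ∣ 2 := (CharP.cast_eq_zero_iff (ZMod p) p 2).mp (by exact_mod_cast h)
  exact h2 ((Nat.prime_dvd_prime_iff_eq hp Nat.prime_two).mp hd)

private lemma cast_inj01 (hp : p.Prime) {s t : ZMod 2}
    (h : ((s.val : ℕ) : ZMod p) = ((t.val : ℕ) : ZMod p)) : s = t := by
  haveI : Fact p.Prime := ⟨hp⟩
  rcases cast01 (p := p) hp s with ⟨hs, hs'⟩ | ⟨hs, hs'⟩ <;>
    rcases cast01 (p := p) hp t with ⟨ht, ht'⟩ | ⟨ht, ht'⟩ <;> simp_all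

private lemma cast_eq_zero (hp : p.Prime) {x : ZMod 2}
    (h : ((x.val : ℕ) : ZMod p) = 0) : x = 0 :=
  cast_inj01 hp (by rw [h, cast_of_zero hp rfl])


private lemma caseA (hp : p.Prime) (h2 : p ≠ 2)
    (a b c : Fin m → ZMod 2) (l mu : ZMod p)
    (hC : ∀ i, (((c i).val : ℕ) : ZMod p)
        = l * (((a i).val : ℕ) : ZMod p) + mu * (((b i).val : ℕ) : ZMod p))
    (hP : ∀ i, a i = 1 → b i = 1) :
    ∃ u v w : ZMod 2, (∀ i, u * a i + v * b i + w * c i = 0) ∧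
      ¬(u = 0 ∧ v = 0 ∧ w = 0) := by
  haveI : Fact p.Prime := ⟨hp⟩
  by_cases hP01 : ∃ i, b i = 1 ∧ a i = 0
  · obtain ⟨i1, hb1, ha1⟩ := hP01
    have hmu : (((c i1).val : ℕ) : ZMod p) = mu := by
      have h := hC i1
      rw [cast_of_zero hp ha1, cast_of_one hp hb1] at h
      simpa using h
    by_cases hP11 : ∃ i, a i = 1 ∧ b i = 1
    · obtain ⟨i2, ha2, hb2⟩ := hP11
      have hnu : (((c i2).val : ℕ) : ZMod p) = l + mu := by
        have h := hC i2
        rw [cast_of_one hp ha2, cast_of_one hp hb2] at h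
        simpa using h
      refine ⟨c i2 + c i1, c i1, 1, ?_, fun h => one_ne_zero h.2.2⟩
      intro i
      rcases zmod2_cases (a i) with ha | ha <;> rcases zmod2_cases (b i) with hb | hb
      · -- a i = 0, b i = 0
        have hc : c i = 0 := by
          apply cast_eq_zero hp
          have h := hC i
          rw [cast_of_zero hp ha, cast_of_zero hp hb] at h
          simpa using h
        rw [ha, hb, hc]; ring
      · -- a i = 0, b i = 1 : c i = c i1
        have hc : c i = c i1 := by
          apply cast_inj01 hp
          have h := hC i
          rw [cast_of_zero hp ha, cast_of_one hp hb] at h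
          rw [hmu]; simpa using h
        rw [ha, hb, hc]
        rcases zmod2_cases (c i1) with h1 | h1 <;>
          rcases zmod2_cases (c i2) with h2 | h2 <;> rw [h1, h2] <;> decide
      · -- a i = 1, b i = 0 : impossible
        exact absurd (hP i ha) (by rw [hb]; decide)
      · -- a i = 1, b i = 1 : c i = c i2
        have hc : c i = c i2 := by
          apply cast_inj01 hp
          have h := hC i
          rw [cast_of_one hp ha, cast_of_one hp hb] at h
          rw [hnu]; simpa using h
        rw [ha, hb, hc]
        rcases zmod2_cases (c i1) with h1 | h1 <;>
          rcases zmod2_cases (c i2) with h2 | h2 <;> rw [h1, h2] <;> decide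
    · -- no coordinate with a = b = 1, hence a = 0
      refine ⟨1, 0, 0, ?_, fun h => one_ne_zero h.1⟩
      intro i
      rcases zmod2_cases (a i) with ha | ha
      · rw [ha]; ring
      · exact absurd ⟨i, ha, hP i ha⟩ hP11
  · -- no coordinate with b = 1, a = 0 : a = b
    refine ⟨1, 1, 0, ?_, fun h => one_ne_zero h.1⟩
    intro i
    have hab : a i = b i := by
      rcases zmod2_cases (a i) with ha | ha <;> rcases zmod2_cases (b i) with hb | hb
      · rw [ha, hb]
      · exact absurd ⟨i, hb, ha⟩ hP01
      · exact absurd (hP i ha) (by rw [hb]; decide)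
      · rw [ha, hb]
    rw [hab]
    rcases zmod2_cases (b i) with h1 | h1 <;> rw [h1, zero_mul, add_zero] <;> decide

private lemma caseC (hp : p.Prime) (h2 : p ≠ 2)
    (a b c : Fin m → ZMod 2) (l mu : ZMod p)
    (hC : ∀ i, (((c i).val : ℕ) : ZMod p)
        = l * (((a i).val : ℕ) : ZMod p) + mu * (((b i).val : ℕ) : ZMod p))
    (hP10 : ∃ i, a i = 1 ∧ b i = 0) (hP01 : ∃ i, b i = 1 ∧ a i = 0) :
    ∃ u v w : ZMod 2, (∀ i, u * a i + v * b i + w * c i = 0) ∧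
      ¬(u = 0 ∧ v = 0 ∧ w = 0) := by
  haveI : Fact p.Prime := ⟨hp⟩
  obtain ⟨i1, ha1, hb1⟩ := hP10
  obtain ⟨i2, hb2, ha2⟩ := hP01
  have hl : (((c i1).val : ℕ) : ZMod p) = l := by
    have h := hC i1
    rw [cast_of_one hp ha1, cast_of_zero hp hb1] at h
    simpa using h
  have hmu : (((c i2).val : ℕ) : ZMod p) = mu := by
    have h := hC i2
    rw [cast_of_zero hp ha2, cast_of_one hp hb2] at h
    simpa using h
  refine ⟨c i1, c i2, 1, ?_, fun h => one_ne_zero h.2.2⟩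
  intro i
  rcases zmod2_cases (a i) with ha | ha <;> rcases zmod2_cases (b i) with hb | hb
  · have hc : c i = 0 := by
      apply cast_eq_zero hp
      have h := hC i
      rw [cast_of_zero hp ha, cast_of_zero hp hb] at h
      simpa using h
    rw [ha, hb, hc]; ring
  · -- a i = 0, b i = 1 : c i = c i2
    have hc : c i = c i2 := by
      apply cast_inj01 hp
      have h := hC i
      rw [cast_of_zero hp ha, cast_of_one hp hb] at h
      rw [hmu]; simpa using h
    rw [ha, hb, hc]
    rcases zmod2_cases (c i1) with h1 | h1 <;>
      rcases zmod2_cases (c i2) with h2 | h2 <;> rw [h1, h2] <;> decide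
  · -- a i = 1, b i = 0 : c i = c i1
    have hc : c i = c i1 := by
      apply cast_inj01 hp
      have h := hC i
      rw [cast_of_one hp ha, cast_of_zero hp hb] at h
      rw [hl]; simpa using h
    rw [ha, hb, hc]
    rcases zmod2_cases (c i1) with h1 | h1 <;>
      rcases zmod2_cases (c i2) with h2 | h2 <;> rw [h1, h2] <;> decide
  · -- a i = 1, b i = 1 : cast (c i) = l + mu
    have hsum : (((c i).val : ℕ) : ZMod p) = l + mu := by
      have h := hC i
      rw [cast_of_one hp ha, cast_of_one hp hb] at h
      simpa using h
    -- case on c i1 and c i2 (determining l and mu)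
    rcases zmod2_cases (c i1) with hc1 | hc1 <;>
      rcases zmod2_cases (c i2) with hc2 | hc2
    · -- l = 0, mu = 0, so cast (c i) = 0
      have hl0 : l = 0 := by rw [← hl, cast_of_zero hp hc1]
      have hmu0 : mu = 0 := by rw [← hmu, cast_of_zero hp hc2]
      have hc : c i = 0 := by
        apply cast_eq_zero hp; rw [hsum, hl0, hmu0, add_zero]
      rw [ha, hb, hc, hc1, hc2]; decide
    · -- l = 0, mu = 1 : cast (c i) = 1, c i = 1
      have hl0 : l = 0 := by rw [← hl, cast_of_zero hp hc1]
      have hmu1 : mu = 1 := by rw [← hmu, cast_of_one hp hc2]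
      have hc : c i = 1 := by
        apply cast_inj01 hp (t := 1)
        rw [hsum, hl0, hmu1, zero_add, cast_of_one hp rfl]
      rw [ha, hb, hc, hc1, hc2]; decide
    · have hl1 : l = 1 := by rw [← hl, cast_of_one hp hc1]
      have hmu0 : mu = 0 := by rw [← hmu, cast_of_zero hp hc2]
      have hc : c i = 1 := by
        apply cast_inj01 hp (t := 1)
        rw [hsum, hl1, hmu0, add_zero, cast_of_one hp rfl]
      rw [ha, hb, hc, hc1, hc2]; decide
    · -- l = 1, mu = 1 : cast (c i) = 2, impossible
      exfalso
      have hl1 : l = 1 := by rw [← hl, cast_of_one hp hc1]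
      have hmu1 : mu = 1 := by rw [← hmu, cast_of_one hp hc2]
      have h2' : (((c i).val : ℕ) : ZMod p) = 2 := by
        rw [hsum, hl1, hmu1]; ring
      rcases cast01 (p := p) hp (c i) with ⟨_, hc'⟩ | ⟨_, hc'⟩
      · exact two_ne_zero' hp h2 (by rw [← h2', hc'])
      · rw [hc'] at h2'
        have h10 : (1 : ZMod p) = 0 := by linear_combination -h2'
        exact one_ne_zero h10


private lemma aux3 (hp : p.Prime) (h2 : p ≠ 2)
    (a b c : Fin m → ZMod 2) (x y z : ZMod p)
    (hpt : ∀ i, x * (((a i).val : ℕ) : ZMod p) + y * (((b i).val : ℕ) : ZMod p)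
        + z * (((c i).val : ℕ) : ZMod p) = 0)
    (hz : z ≠ 0) :
    ∃ u v w : ZMod 2, (∀ i, u * a i + v * b i + w * c i = 0) ∧
      ¬(u = 0 ∧ v = 0 ∧ w = 0) := by
  haveI : Fact p.Prime := ⟨hp⟩
  have hzz : z⁻¹ * z = 1 := inv_mul_cancel₀ hz
  set l : ZMod p := -(x * z⁻¹) with hl
  set mu : ZMod p := -(y * z⁻¹) with hmu
  have hC : ∀ i, (((c i).val : ℕ) : ZMod p)
      = l * (((a i).val : ℕ) : ZMod p) + mu * (((b i).val : ℕ) : ZMod p) := by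
    intro i
    rw [hl, hmu]
    linear_combination z⁻¹ * hpt i - (((c i).val : ℕ) : ZMod p) * hzz
  by_cases hP10 : ∃ i, a i = 1 ∧ b i = 0
  · by_cases hP01 : ∃ i, b i = 1 ∧ a i = 0
    · exact caseC hp h2 a b c l mu hC hP10 hP01
    · -- swap roles of a and b
      have hC' : ∀ i, (((c i).val : ℕ) : ZMod p)
          = mu * (((b i).val : ℕ) : ZMod p) + l * (((a i).val : ℕ) : ZMod p) := by
        intro i; rw [hC i]; ring
      have hP : ∀ i, b i = 1 → a i = 1 := by
        intro i hb
        rcases zmod2_cases (a i) with ha | ha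
        · exact absurd ⟨i, hb, ha⟩ hP01
        · exact ha
      obtain ⟨u, v, w, hrel, hnt⟩ := caseA hp h2 b a c mu l hC' hP
      exact ⟨v, u, w, fun i => by rw [← hrel i]; ring, fun h => hnt ⟨h.2.1, h.1, h.2.2⟩⟩
  · have hP : ∀ i, a i = 1 → b i = 1 := by
      intro i ha
      rcases zmod2_cases (b i) with hb | hb
      · exact absurd ⟨i, ha, hb⟩ hP10
      · exact hb
    exact caseA hp h2 a b c l mu hC hP


private lemma core (hp : p.Prime) (h2 : p ≠ 2) {n : ℕ} (hn : n ≤ 3)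
    (g : Fin n → Fin m → ZMod 2) (hg : LinearIndependent (ZMod 2) g) :
    LinearIndependent (ZMod p) (fun j => (fun i => (((g j i).val : ℕ) : ZMod p))) := by
  haveI : Fact p.Prime := ⟨hp⟩
  rw [Fintype.linearIndependent_iff] at hg ⊢
  interval_cases n
  · intro _ _ j; exact j.elim0
  · -- n = 1
    intro co hsum j
    have hne : ∃ i, g 0 i = 1 := by
      by_contra h
      push_neg at h
      have hz : g 0 = 0 := funext fun i => by
        rcases zmod2_cases (g 0 i) with h' | h'
        · exact h'
        · exact absurd h' (h i)
      have := hg (fun _ => 1) (by simp [Fin.sum_univ_one, hz]) 0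
      exact one_ne_zero this
    obtain ⟨i, hi⟩ := hne
    rw [Fin.sum_univ_one] at hsum
    have hs := congrFun hsum i
    simp only [Pi.smul_apply, smul_eq_mul, Pi.zero_apply, cast_of_one hp hi, mul_one] at hs
    fin_cases j
    exact hs
  · -- n = 2
    intro co hsum
    rw [Fin.sum_univ_two] at hsum
    have hpt : ∀ i, co 0 * (((g 0 i).val : ℕ) : ZMod p)
        + co 1 * (((g 1 i).val : ℕ) : ZMod p) = 0 := by
      intro i
      have := congrFun hsum i
      simpa using this
    have hne0 : ∃ i, g 0 i = 1 := by
      by_contra h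
      push_neg at h
      have hz : g 0 = 0 := funext fun i => by
        rcases zmod2_cases (g 0 i) with h' | h'
        · exact h'
        · exact absurd h' (h i)
      have := hg ![1, 0] (by simp [Fin.sum_univ_two, hz]) 0
      simp at this
    have hne1 : ∃ i, g 1 i = 1 := by
      by_contra h
      push_neg at h
      have hz : g 1 = 0 := funext fun i => by
        rcases zmod2_cases (g 1 i) with h' | h'
        · exact h'
        · exact absurd h' (h i)
      have := hg ![0, 1] (by simp [Fin.sum_univ_two, hz]) 1
      simp at this
    have key : co 0 = 0 ∧ co 1 = 0 := by
      by_cases hx : co 0 = 0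
      · refine ⟨hx, ?_⟩
        by_contra hy
        obtain ⟨i, hi⟩ := hne1
        have := hpt i
        rw [hx, zero_mul, zero_add, cast_of_one hp hi, mul_one] at this
        exact hy this
      · exfalso
        have hsub1 : ∀ i, g 0 i = 1 → g 1 i = 1 := by
          intro i hi
          rcases zmod2_cases (g 1 i) with h' | h'
          · exfalso
            have := hpt i
            rw [cast_of_one hp hi, cast_of_zero hp h', mul_one, mul_zero, add_zero] at this
            exact hx this
          · exact h'
        have hy : co 1 ≠ 0 := by
          obtain ⟨i, hi⟩ := hne0
          have hi' := hsub1 i hi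
          have := hpt i
          rw [cast_of_one hp hi, cast_of_one hp hi', mul_one, mul_one] at this
          intro hy0
          rw [hy0, add_zero] at this
          exact hx this
        have hsub2 : ∀ i, g 1 i = 1 → g 0 i = 1 := by
          intro i hi
          rcases zmod2_cases (g 0 i) with h' | h'
          · exfalso
            have := hpt i
            rw [cast_of_one hp hi, cast_of_zero hp h', mul_one, mul_zero, zero_add] at this
            exact hy this
          · exact h'
        have heq : g 0 = g 1 := funext fun i => by
          rcases zmod2_cases (g 0 i) with h' | h'
          · rcases zmod2_cases (g 1 i) with h'' | h''
            · rw [h', h'']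
            · exact absurd (hsub2 i h'') (by rw [h']; decide)
          · rw [h', hsub1 i h']
        have := hg ![1, 1] (by
          funext i
          simp only [Fin.sum_univ_two, Matrix.cons_val_zero, Matrix.cons_val_one,
            Matrix.head_cons, one_smul, Pi.add_apply, Pi.zero_apply, heq]
          exact add_self2 (g 1 i)) 0
        simp at this
    intro j
    fin_cases j
    · exact key.1
    · exact key.2
  · -- n = 3
    intro co hsum
    rw [Fin.sum_univ_three] at hsum
    have hpt : ∀ i, co 0 * (((g 0 i).val : ℕ) : ZMod p)
        + co 1 * (((g 1 i).val : ℕ) : ZMod p)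
        + co 2 * (((g 2 i).val : ℕ) : ZMod p) = 0 := by
      intro i
      have := congrFun hsum i
      simpa using this
    have contra : ∀ u v w : ZMod 2,
        (∀ i, u * g 0 i + v * g 1 i + w * g 2 i = 0) → ¬(u = 0 ∧ v = 0 ∧ w = 0) → False := by
      intro u v w hrel hnt
      have := hg ![u, v, w] (by
        funext i
        simpa [Fin.sum_univ_three] using hrel i)
      exact hnt ⟨this 0, this 1, this 2⟩
    have h0 : co 2 = 0 := by
      by_contra hz
      obtain ⟨u, v, w, hrel, hnt⟩ := aux3 hp h2 (g 0) (g 1) (g 2) (co 0) (co 1) (co 2) hpt hz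
      exact contra u v w hrel hnt
    have h1 : co 1 = 0 := by
      by_contra hz
      obtain ⟨u, v, w, hrel, hnt⟩ := aux3 hp h2 (g 0) (g 2) (g 1) (co 0) (co 2) (co 1)
        (fun i => by linear_combination hpt i) hz
      exact contra u w v (fun i => by linear_combination hrel i)
        (fun h => hnt ⟨h.1, h.2.2, h.2.1⟩)
    have h2' : co 0 = 0 := by
      by_contra hz
      obtain ⟨u, v, w, hrel, hnt⟩ := aux3 hp h2 (g 1) (g 2) (g 0) (co 1) (co 2) (co 0)
        (fun i => by linear_combination hpt i) hz
      exact contra w u v (fun i => by linear_combination hrel i)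
        (fun h => hnt ⟨h.2.1, h.2.2, h.1⟩)
    intro j
    fin_cases j
    · exact h2'
    · exact h1
    · exact h0

end Stmt19Aux

/-- If `K` is a simplicial complex of dimension at most 2 and `f` is a
nondegenerate simplicial map from `K` to `X(F_2^m)`, then for any prime `p`,
reading the 0/1 coordinates of `f` in `ZMod p` gives a nondegenerate simplicial
map into `X(F_p^m)`.  (Consequently `s_2(K) ≤ s_p(K)` when `dim K ≤ 2`.) -/
theorem stmt19 {V : Type*} (K : Set (Finset V)) (hK : ∀ s ∈ K, s.card ≤ 3)
    (m : ℕ) (f : V → (Fin m → ZMod 2))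
    (hf : ∀ s ∈ K, LinearIndependent (ZMod 2) (fun v : s => f v.1))
    (p : ℕ) (hp : p.Prime) :
    ∀ s ∈ K, LinearIndependent (ZMod p)
      (fun v : s => (fun i => (((f v.1 i).val : ℕ) : ZMod p))) := by
  intro s hs
  by_cases hp2 : p = 2
  · subst hp2
    have heq : (fun v : s => (fun i => (((f v.1 i).val : ℕ) : ZMod 2)))
        = fun v : s => f v.1 := by
      funext v i
      exact Stmt19Aux.cast_self (f v.1 i)
    rw [heq]
    exact hf s hs
  · have e : Fin s.card ≃ s := s.equivFin.symm
    have hg : LinearIndependent (ZMod 2) ((fun v : s => f v.1) ∘ e) :=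
      (hf s hs).comp e e.injective
    have hcore := Stmt19Aux.core hp hp2 (hK s hs)
      (fun j : Fin s.card => f (e j).1) hg
    exact (linearIndependent_equiv e
      (f := fun v : s => (fun i => (((f v.1 i).val : ℕ) : ZMod p)))).mp hcore
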